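/- Let x be a balanced word over {a,b} with m a's, all prefixes of nonnegative φ-value (φ(a)=2, φ(b)=−2), and let n ≥ 1. Then the letter-repeated word y = α₁ⁿ…αₜⁿ also has all prefixes of nonnegative φ-value, is balanced, has nm occurrences of a, and satisfies w(y) = n² w(x) ≥ 2nm. -/

import Mathlib

/-- A word over the alphabet {a,b} is a list of booleans: `true` = a, `false` = b. -/
abbrev Word := List Bool

/-- φ(a) = 2, φ(b) = -2, extended additively to words. -/
def phi (y : Word) : ℤ := (y.map (fun c => if c then (2 : ℤ) else -2)).sum

/-- The width of a word: the sum of φ over all nonempty prefixes. -/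
def wd (y : Word) : ℤ := ∑ i ∈ Finset.range y.length, phi (y.take (i + 1))

lemma phi_append (l1 l2 : Word) : phi (l1 ++ l2) = phi l1 + phi l2 := by simp [phi]

lemma phi_cons (c : Bool) (l : Word) : phi (c :: l) = (if c then 2 else -2) + phi l := by
  simp [phi]

lemma phi_replicate (n : ℕ) (c : Bool) :
    phi (List.replicate n c) = n * (if c then 2 else -2) := by
  induction n with
  | zero => simp [phi]
  | succ k ih => rw [List.replicate_succ, phi_cons, ih]; push_cast; ring

lemma phi_flatMap (x : Word) (n : ℕ) :
    phi (x.flatMap (fun c => List.replicate n c)) = n * phi x := by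
  induction x with
  | nil => simp [phi]
  | cons c xs ih =>
    rw [List.flatMap_cons, phi_append, phi_replicate, ih, phi_cons]; ring

lemma count_flatMap (x : Word) (n : ℕ) :
    (x.flatMap (fun c => List.replicate n c)).count true = n * x.count true := by
  induction x with
  | nil => simp
  | cons c xs ih =>
    rw [List.flatMap_cons, List.count_append, ih, List.count_cons, List.count_replicate]
    cases c <;> simp <;> ring

lemma length_flatMap (x : Word) (n : ℕ) :
    (x.flatMap (fun c => List.replicate n c)).length = n * x.length := by
  induction x with
  | nil => simp
  | cons c xs ih => rw [List.flatMap_cons, List.length_append, ih]; simp; ring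

lemma pre_nonneg (n : ℕ) : ∀ (x : Word) (s : ℤ) (i : ℕ),
    (∀ j, 0 ≤ s + n * phi (x.take j)) →
    0 ≤ s + phi ((x.flatMap (fun c => List.replicate n c)).take i) := by
  intro x
  induction x with
  | nil => intro s i h; simpa [phi] using h 0
  | cons c xs ih =>
    intro s i h
    rw [List.flatMap_cons, List.take_append, phi_append,
        List.take_replicate, List.length_replicate, phi_replicate]
    by_cases hin : n ≤ i
    · rw [min_eq_right hin]
      have := ih (s + n * (if c then 2 else -2)) (i - n) ?_
      · linarith
      · intro j
        have hj := h (j + 1)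
        rw [List.take_succ_cons, phi_cons] at hj
        linarith [hj]
    · push_neg at hin
      rw [min_eq_left hin.le, Nat.sub_eq_zero_of_le hin.le]
      simp only [List.take_zero, phi]
      simp only [List.map_nil, List.sum_nil, add_zero]
      have h0 := h 0
      have h1 := h 1
      simp only [List.take_zero, phi, List.map_nil, List.sum_nil, mul_zero, add_zero] at h0
      rw [show (c :: xs).take 1 = [c] by simp,
          show phi [c] = (if c then 2 else -2) by simp [phi]] at h1
      cases c <;> simp at h1 ⊢ <;>
        nlinarith [h0, h1, (Nat.cast_nonneg i : (0:ℤ) ≤ i),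
          (show (i:ℤ) ≤ n by exact_mod_cast hin.le)]

lemma wd_append (l1 l2 : Word) :
    wd (l1 ++ l2) = wd l1 + l2.length * phi l1 + wd l2 := by
  unfold wd
  rw [List.length_append, Finset.sum_range_add]
  have h1 : ∑ i ∈ Finset.range l1.length, phi ((l1 ++ l2).take (i + 1))
      = ∑ i ∈ Finset.range l1.length, phi (l1.take (i + 1)) := by
    apply Finset.sum_congr rfl
    intro i hi
    rw [List.take_append_of_le_length (Nat.succ_le_of_lt (Finset.mem_range.mp hi))]
  have h2 : ∑ i ∈ Finset.range l2.length, phi ((l1 ++ l2).take (l1.length + i + 1))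
      = ∑ i ∈ Finset.range l2.length, (phi l1 + phi (l2.take (i + 1))) := by
    apply Finset.sum_congr rfl
    intro i hi
    rw [show l1.length + i + 1 = l1.length + (i + 1) by ring, List.take_length_add_append, phi_append]
  rw [h1, h2, Finset.sum_add_distrib, Finset.sum_const, nsmul_eq_mul, Finset.card_range]
  ring

lemma wd_replicate (n : ℕ) (c : Bool) :
    wd (List.replicate n c) = (∑ i ∈ Finset.range n, ((i : ℤ) + 1)) * (if c then 2 else -2) := by
  unfold wd
  rw [List.length_replicate, Finset.sum_mul]
  apply Finset.sum_congr rfl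
  intro i hi
  rw [List.take_replicate, min_eq_left (Nat.succ_le_of_lt (Finset.mem_range.mp hi)), phi_replicate]
  push_cast; ring

lemma wd_cons (c : Bool) (xs : Word) :
    wd (c :: xs) = ((xs.length : ℤ) + 1) * (if c then 2 else -2) + wd xs := by
  have := wd_append [c] xs
  simp only [List.singleton_append] at this
  rw [this]
  have h1 : wd [c] = (if c then 2 else -2) := by simp [wd, phi]
  have h2 : phi [c] = (if c then 2 else -2) := by simp [phi]
  rw [h1, h2]; ring

lemma wd_flatMap (x : Word) (n : ℕ) :
    wd (x.flatMap (fun c => List.replicate n c)) =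
      (n : ℤ) ^ 2 * wd x + ((∑ i ∈ Finset.range n, ((i : ℤ) + 1)) - (n : ℤ) ^ 2) * phi x := by
  induction x with
  | nil => simp [wd, phi]
  | cons c xs ih =>
    rw [List.flatMap_cons, wd_append, wd_replicate, phi_replicate, length_flatMap, ih,
        wd_cons, phi_cons]
    push_cast
    ring

lemma phi_eq (l : Word) : phi l = 2 * l.length - 4 * l.count false := by
  induction l with
  | nil => simp [phi]
  | cons c xs ih =>
    rw [phi_cons, ih, List.count_cons, List.length_cons]
    cases c <;> simp <;> ring

lemma sum_even_bd (m : ℕ) :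
    ∑ i ∈ Finset.range (2 * m), (if i % 2 = 0 then (2 : ℤ) else 0) = 2 * m := by
  induction m with
  | zero => simp
  | succ k ih =>
    rw [show 2 * (k + 1) = (2 * k + 1) + 1 by ring, Finset.sum_range_succ,
        Finset.sum_range_succ, ih]
    rw [if_pos (show (2 * k) % 2 = 0 by omega), if_neg (show ¬(2 * k + 1) % 2 = 0 by omega)]
    push_cast; ring

lemma wd_lower (x : Word) (m : ℕ) (hbal : phi x = 0) (hm : x.count true = m)
    (hpre : ∀ i, 0 ≤ phi (x.take i)) : (2 : ℤ) * m ≤ wd x ∧ x.length = 2 * m := by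
  have hlen : x.length = 2 * m := by
    have h1 := phi_eq x
    have h2 : x.count true + x.count false = x.length := by
      have := List.count_true_add_count_false x
      omega
    rw [hbal] at h1
    omega
  refine ⟨?_, hlen⟩
  have key : ∀ i ∈ Finset.range x.length,
      (if i % 2 = 0 then (2 : ℤ) else 0) ≤ phi (x.take (i + 1)) := by
    intro i hi
    rw [Finset.mem_range] at hi
    by_cases hpar : i % 2 = 0
    · rw [if_pos hpar]
      have h1 := hpre (i + 1)
      have h2 := phi_eq (x.take (i + 1))
      have h3 : (x.take (i + 1)).length = i + 1 := by
        rw [List.length_take]; omega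
      rw [h3] at h2
      omega
    · rw [if_neg hpar]; exact hpre (i + 1)
  have := Finset.sum_le_sum key
  rw [hlen, sum_even_bd] at this
  calc (2:ℤ) * m ≤ _ := this
  _ = wd x := by rw [wd, hlen]

theorem braid_pattern_width (x : Word) (m n : ℕ) (hn : 1 ≤ n)
    (hbal : phi x = 0) (hpre : ∀ i, 0 ≤ phi (x.take i))
    (hm : x.count true = m) :
    (∀ i, 0 ≤ phi ((x.flatMap (fun c => List.replicate n c)).take i)) ∧
    phi (x.flatMap (fun c => List.replicate n c)) = 0 ∧
    (x.flatMap (fun c => List.replicate n c)).count true = n * m ∧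
    wd (x.flatMap (fun c => List.replicate n c)) = (n : ℤ) ^ 2 * wd x ∧
    2 * (n : ℤ) * (m : ℤ) ≤ (n : ℤ) ^ 2 * wd x := by
  obtain ⟨hlow, hlen⟩ := wd_lower x m hbal hm hpre
  refine ⟨?_, ?_, ?_, ?_, ?_⟩
  · intro i
    have := pre_nonneg n x 0 i (fun j => by
      have := hpre j
      positivity)
    simpa using this
  · rw [phi_flatMap, hbal, mul_zero]
  · rw [count_flatMap, hm]
  · rw [wd_flatMap, hbal, mul_zero, add_zero]
  · have hn' : (1 : ℤ) ≤ n := by exact_mod_cast hn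
    have hm' : (0 : ℤ) ≤ m := by positivity
    have h1 : (n : ℤ) ^ 2 * (2 * m) ≤ (n : ℤ) ^ 2 * wd x :=
      mul_le_mul_of_nonneg_left hlow (by positivity)
    have h2 : (0 : ℤ) ≤ (n : ℤ) * m * ((n : ℤ) - 1) :=
      mul_nonneg (mul_nonneg (by linarith) hm') (by linarith)
    nlinarith [h1, h2]
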